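/- Let Q be a finite unital quantale with unit e which is unitally nondistributive, i.e. e ≤ sSup {β | β ◁ e} and there exists A ⊆ Q with e ⊓ sSup A ≰ ⨆ a ∈ A, (e ⊓ a). Then there exist α, β ∈ Q such that e ⊓ (α ⊔ β) ≰ (e ⊓ α) ⊔ (e ⊓ β) and e ≰ α ⊔ β. In particular the underlying lattice of Q is strictly nondistributive. -/

import Mathlib

/-- In a finite unitally nondistributive unital quantale with unit `e`,
there are `α, β` with `e ⊓ (α ⊔ β) ≰ (e ⊓ α) ⊔ (e ⊓ β)` and `e ≰ α ⊔ β`; in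
particular the underlying lattice is strictly nondistributive. -/
theorem stmt_6 {Q : Type*} [CompleteLattice Q] [Fintype Q] (mul : Q → Q → Q)
    (hassoc : ∀ a b c : Q, mul (mul a b) c = mul a (mul b c))
    (hsSup_left : ∀ (A : Set Q) (b : Q), mul (sSup A) b = ⨆ a ∈ A, mul a b)
    (hsSup_right : ∀ (A : Set Q) (b : Q), mul b (sSup A) = ⨆ a ∈ A, mul b a)
    (e : Q) (he_left : ∀ a : Q, mul e a = a) (he_right : ∀ a : Q, mul a e = a)
    (he_approx : e ≤ sSup {β : Q | ∀ A : Set Q, e ≤ sSup A → ∃ c ∈ A, β ≤ c})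
    (hnd : ∃ A : Set Q, ¬ e ⊓ sSup A ≤ ⨆ a ∈ A, e ⊓ a) :
    ∃ α β : Q, ¬ e ⊓ (α ⊔ β) ≤ (e ⊓ α) ⊔ (e ⊓ β) ∧ ¬ e ≤ α ⊔ β := by
  -- If e ≤ α ⊔ β, then binary distributivity at e holds automatically.
  have key : ∀ α β : Q, e ≤ α ⊔ β → e ⊓ (α ⊔ β) ≤ (e ⊓ α) ⊔ (e ⊓ β) := by
    intro α β h
    have : e ≤ (e ⊓ α) ⊔ (e ⊓ β) := by
      refine he_approx.trans (sSup_le ?_)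
      intro t ht
      obtain ⟨c, hc, htc⟩ := ht {α, β} (by simpa [sSup_pair] using h)
      have hte : t ≤ e := by
        obtain ⟨c, hc, htc⟩ := ht {e} (by simp)
        simpa using hc ▸ htc
      rcases hc with rfl | hc
      · exact le_sup_of_le_left (le_inf hte htc)
      · simp only [Set.mem_singleton_iff] at hc
        exact le_sup_of_le_right (le_inf hte (hc ▸ htc))
    exact inf_le_left.trans this
  by_contra hcon
  push_neg at hcon
  have hdist : ∀ α β : Q, e ⊓ (α ⊔ β) ≤ (e ⊓ α) ⊔ (e ⊓ β) := by
    intro α β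
    by_cases h : e ⊓ (α ⊔ β) ≤ (e ⊓ α) ⊔ (e ⊓ β)
    · exact h
    · exact key α β (hcon α β h)
  obtain ⟨A, hA⟩ := hnd
  apply hA
  have hfin : A.Finite := Set.toFinite A
  refine Set.Finite.induction_on (motive := fun s _ => e ⊓ sSup s ≤ ⨆ a ∈ s, e ⊓ a) A hfin (by simp) ?_
  intro a s _ _ ih
  rw [sSup_insert]
  calc e ⊓ (a ⊔ sSup s) ≤ (e ⊓ a) ⊔ (e ⊓ sSup s) := hdist a (sSup s)
    _ ≤ (e ⊓ a) ⊔ ⨆ x ∈ s, e ⊓ x := sup_le_sup_left ih _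
    _ = ⨆ x ∈ insert a s, e ⊓ x := by rw [iSup_insert]
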